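/- arXiv:1208.5273 — 2 statements merged into one kernel-verified Lean document; each statement's English description precedes it below -/
import Mathlib

section
/- Transition potential bounds. Let f, g ∈ Ψ, let ω be an averaging kernel, and let L > 0. Set Δ_L f(x) = f((x+L)−) − f((x−L)+), Δ_L g(x) = g((x+L)−) − g((x−L)+), and e_L = ∫_L^∞ ω(x) dx. Then for all x ∈ ℝ: Ξ(ω; f, g; x, x) ≤ Δ_L f(x)·Δ_L g(x) + e_L, and |(f⊗ω)(x) − f(x)| ≤ Δ_L f(x) + e_L. -/
open MeasureTheory Filter Set

noncomputable section

/-- Convolution `(f ⊗ ω)(x) = ∫ y, f y · ω (x − y)`. -/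
def conv (f ω : ℝ → ℝ) (x : ℝ) : ℝ := ∫ y : ℝ, f y * ω (x - y)

/-- `ω` is an averaging kernel: even, nonnegative, of bounded variation, integrating to 1. -/
def IsAveragingKernel (ω : ℝ → ℝ) : Prop :=
  (∀ x, ω (-x) = ω x) ∧ (∀ x, 0 ≤ ω x) ∧ BoundedVariationOn ω Set.univ ∧
    MeasureTheory.Integrable ω ∧ (∫ x : ℝ, ω x) = 1

/-- The essential supremum `‖ω‖∞` of a kernel, as a real number. -/
def kerSup (ω : ℝ → ℝ) : ℝ := (eLpNorm ω ⊤ MeasureTheory.volume).toReal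

/-- `ω` is regular: for some `W ∈ (0,∞]`, it vanishes outside `[−W, W]` and is
positive on `(−W, W)` (the case `W = ∞` being that `ω` is everywhere positive). -/
def IsRegularKernel (ω : ℝ → ℝ) : Prop :=
  (∀ x, 0 < ω x) ∨
    ∃ W : ℝ, 0 < W ∧ (∀ x, W < |x| → ω x = 0) ∧ (∀ x, |x| < W → 0 < ω x)

/-- Membership in `𝒳`: nondecreasing self-maps of `[0,1]`. -/
def MemX (h : ℝ → ℝ) : Prop :=
  MonotoneOn h (Icc 0 1) ∧ MapsTo h (Icc 0 1) (Icc 0 1)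

/-- Left limit `h(u−)` of `h ∈ 𝒳` at `u ∈ [0,1]`, with the convention `h(0−) = 0`. -/
def lm (h : ℝ → ℝ) (u : ℝ) : ℝ := if u ≤ 0 then 0 else sSup (h '' Ico 0 u)

/-- Right limit `h(u+)` of `h ∈ 𝒳` at `u ∈ [0,1]`, with the convention `h(1+) = 1`. -/
def rm (h : ℝ → ℝ) (u : ℝ) : ℝ := if 1 ≤ u then 1 else sInf (h '' Ioc u 1)

/-- A canonical generalized inverse of `h ∈ 𝒳` (any valid inverse has the same integrals,
so the potential below is unambiguous). -/
def Xinv (h : ℝ → ℝ) (v : ℝ) : ℝ := sInf ({1} ∪ {u ∈ Icc (0:ℝ) 1 | v ≤ h u})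

/-- The potential `Φ(hf, hg; u, v) = ∫₀ᵘ hg⁻¹ + ∫₀ᵛ hf⁻¹ − u·v`. -/
def Pot (hf hg : ℝ → ℝ) (u v : ℝ) : ℝ :=
  (∫ x in (0:ℝ)..u, Xinv hg x) + (∫ x in (0:ℝ)..v, Xinv hf x) - u * v

/-- `A(hf, hg) = Φ(hf, hg; 1, 1)`. -/
def Agap (hf hg : ℝ → ℝ) : ℝ := Pot hf hg 1 1

/-- `(u,v)` is a crossing point of `(hf, hg)`:
`u ∈ [hg(v−), hg(v+)]` and `v ∈ [hf(u−), hf(u+)]`. -/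
def IsCrossing (hf hg : ℝ → ℝ) (u v : ℝ) : Prop :=
  u ∈ Icc (0:ℝ) 1 ∧ v ∈ Icc (0:ℝ) 1 ∧
    u ∈ Icc (lm hg v) (rm hg v) ∧ v ∈ Icc (lm hf u) (rm hf u)

/-- The strictly positive gap condition: there is a nontrivial crossing point, and every
nontrivial crossing point satisfies `Φ(hf, hg; u, v) > max {0, A(hf, hg)}`. -/
def StrictPosGap (hf hg : ℝ → ℝ) : Prop :=
  (∃ u v, IsCrossing hf hg u v ∧ ¬(u = 0 ∧ v = 0) ∧ ¬(u = 1 ∧ v = 1)) ∧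
    ∀ u v, IsCrossing hf hg u v → ¬(u = 0 ∧ v = 0) → ¬(u = 1 ∧ v = 1) →
      max 0 (Agap hf hg) < Pot hf hg u v

/-- Membership in `Ψ`: nondecreasing functions `ℝ → [0,1]`. -/
def MemPsi (f : ℝ → ℝ) : Prop := Monotone f ∧ ∀ x, f x ∈ Icc (0:ℝ) 1

/-- `f` is `(a,b)`-interpolating: limits `a` at `−∞` and `b` at `+∞`. -/
def Interpolates (f : ℝ → ℝ) (a b : ℝ) : Prop :=
  Filter.Tendsto f Filter.atBot (nhds a) ∧ Filter.Tendsto f Filter.atTop (nhds b)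

/-- Right limit `f(x+)` of a nondecreasing bounded function. -/
def rlim (f : ℝ → ℝ) (x : ℝ) : ℝ := sInf (f '' Ioi x)

/-- Left limit `f(x−)` of a nondecreasing bounded function. -/
def llim (f : ℝ → ℝ) (x : ℝ) : ℝ := sSup (f '' Iio x)

/-- `f(−∞)`, the limit at `−∞` of a nondecreasing bounded function. -/
def limBot (f : ℝ → ℝ) : ℝ := sInf (Set.range f)

/-- `f(+∞)`, the limit at `+∞` of a nondecreasing bounded function. -/
def limTop (f : ℝ → ℝ) : ℝ := sSup (Set.range f)

/-- The Lebesgue–Stieltjes measure associated with a (monotone) function. -/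
def stieltjesOf (f : ℝ → ℝ) : Measure ℝ :=
  haveI := Classical.dec (Monotone f)
  if h : Monotone f then h.stieltjesFunction.measure else 0

/-- Oriented Lebesgue–Stieltjes integral `∫_{(a,b]} φ df`, with the convention
`∫_{(a,b]} = −∫_{(b,a]}` when `b < a`. -/
def sInteg (f : ℝ → ℝ) (φ : ℝ → ℝ) (a b : ℝ) : ℝ :=
  if a ≤ b then ∫ y in Ioc a b, φ y ∂(stieltjesOf f)
  else - ∫ y in Ioc b a, φ y ∂(stieltjesOf f)

/-- `Ξ(ω; f, g; x₁, x₂)`. -/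
def Xi (ω f g : ℝ → ℝ) (x₁ x₂ : ℝ) : ℝ :=
  (∫ x in Ioi (0:ℝ), ω x * sInteg f (fun y => rlim g x₁ - g (y - x)) x₂ (x₁ + x)) +
    (∫ x in Ioi (0:ℝ), ω x * sInteg g (fun y => rlim f x₂ - f (y - x)) x₁ (x₂ + x))

lemma rlim_eq {f : ℝ → ℝ} (hm : Monotone f) (z : ℝ) : rlim f z = Function.rightLim f z :=
  (hm.rightLim_eq_sInf (x := z)).symm

lemma llim_eq {f : ℝ → ℝ} (hm : Monotone f) (z : ℝ) : llim f z = Function.leftLim f z :=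
  (hm.leftLim_eq_sSup (x := z)).symm

/-- set integral of shifted kernel over the far tail. -/
lemma tail_integral (ω : ℝ → ℝ) (hev : ∀ x, ω (-x) = ω x) (x L : ℝ) :
    (∫ y in Ici (x + L), ω (x - y)) = ∫ y in Ioi L, ω y := by
  have h1 : (fun y => x - y) ⁻¹' (Iic (-L)) = Ici (x + L) := by
    ext y; simp only [mem_preimage, mem_Iic, mem_Ici]; constructor <;> intro h <;> linarith
  have h2 := MeasurePreserving.setIntegral_preimage_emb
    (Measure.measurePreserving_sub_left volume x)
    (MeasurableEquiv.subLeft x).measurableEmbedding ω (Iic (-L))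
  rw [h1] at h2
  rw [h2]
  have h3 : (fun t : ℝ => -t) ⁻¹' (Iic (-L)) = Ici L := by
    ext y; simp only [mem_preimage, mem_Iic, mem_Ici]; constructor <;> intro h <;> linarith
  have h4 := MeasurePreserving.setIntegral_preimage_emb
    (Measure.measurePreserving_neg volume)
    (MeasurableEquiv.neg ℝ).measurableEmbedding ω (Iic (-L))
  rw [h3] at h4
  rw [← h4]
  simp_rw [hev]
  exact integral_Ici_eq_integral_Ioi

lemma tail_integral' (ω : ℝ → ℝ) (x L : ℝ) :
    (∫ y in Iic (x - L), ω (x - y)) = ∫ y in Ioi L, ω y := by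
  have h1 : (fun y => x - y) ⁻¹' (Ici L) = Iic (x - L) := by
    ext y; simp only [mem_preimage, mem_Ici, mem_Iic]; constructor <;> intro h <;> linarith
  have h2 := MeasurePreserving.setIntegral_preimage_emb
    (Measure.measurePreserving_sub_left volume x)
    (MeasurableEquiv.subLeft x).measurableEmbedding ω (Ici L)
  rw [h1] at h2
  rw [h2]
  exact integral_Ici_eq_integral_Ioi

theorem conv_bound
    (ω f : ℝ → ℝ) (hω : IsAveragingKernel ω) (hfΨ : MemPsi f)
    (L : ℝ) (hL : 0 < L) (x : ℝ) :
      |conv f ω x - f x| ≤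
        (llim f (x + L) - rlim f (x - L)) + ∫ y in Ioi L, ω y := by
  obtain ⟨hev, hpos, _, hint, hone⟩ := hω
  obtain ⟨hm, hb⟩ := hfΨ
  have hb0 : ∀ y, 0 ≤ f y := fun y => (hb y).1
  have hb1 : ∀ y, f y ≤ 1 := fun y => (hb y).2
  set Df := llim f (x + L) - rlim f (x - L) with hDf
  set e := ∫ y in Ioi L, ω y with he
  have hωx_int : Integrable (fun y => ω (x - y)) :=
    (MeasurePreserving.integrable_comp_emb (Measure.measurePreserving_sub_left volume x)
      (MeasurableEquiv.subLeft x).measurableEmbedding).mpr hint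
  have hωx_one : (∫ y, ω (x - y)) = 1 := by
    rw [MeasurePreserving.integral_comp (Measure.measurePreserving_sub_left volume x)
      (MeasurableEquiv.subLeft x).measurableEmbedding ω]
    exact hone
  have hωx_pos : ∀ y, 0 ≤ ω (x - y) := fun y => hpos _
  -- basic monotone limit facts
  have hDf0 : 0 ≤ Df := by
    rw [hDf, llim_eq hm, rlim_eq hm, sub_nonneg]
    exact hm.rightLim_le_leftLim (by linarith)
  have hfy_le : ∀ y, y < x + L → f y - f x ≤ Df := by
    intro y hy
    have h1 : f y ≤ llim f (x + L) := by
      rw [llim_eq hm]; exact hm.le_leftLim hy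
    have h2 : rlim f (x - L) ≤ f x := by
      rw [rlim_eq hm]; exact hm.rightLim_le (by linarith)
    rw [hDf]; linarith
  have hfy_ge : ∀ y, x - L < y → -Df ≤ f y - f x := by
    intro y hy
    have h1 : rlim f (x - L) ≤ f y := by
      rw [rlim_eq hm]; exact hm.rightLim_le hy
    have h2 : f x ≤ llim f (x + L) := by
      rw [llim_eq hm]; exact hm.le_leftLim (by linarith)
    rw [hDf]; linarith
  set u : ℝ → ℝ := fun y => (f y - f x) * ω (x - y) with hu
  set vU : ℝ → ℝ := fun y => Df * ω (x - y) + (Ici (x + L)).indicator (fun y => ω (x - y)) y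
  set vL : ℝ → ℝ := fun y => -(Df * ω (x - y)) - (Iic (x - L)).indicator (fun y => ω (x - y)) y
  have hfm : Measurable f := hm.measurable
  have hu_int : Integrable u :=
    hωx_int.bdd_mul ((hfm.sub_const (f x)).aestronglyMeasurable)
      (c := 1) (Eventually.of_forall fun y => by
        rw [Real.norm_eq_abs, abs_sub_le_iff]
        constructor <;> [linarith [hb0 x, hb1 y]; linarith [hb0 y, hb1 x]])
  have hindU_int : Integrable ((Ici (x + L)).indicator (fun y => ω (x - y))) :=
    hωx_int.indicator measurableSet_Ici
  have hindL_int : Integrable ((Iic (x - L)).indicator (fun y => ω (x - y))) :=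
    hωx_int.indicator measurableSet_Iic
  have hvU_int : Integrable vU := (hωx_int.const_mul Df).add hindU_int
  have hvL_int : Integrable vL := ((hωx_int.const_mul Df).neg).sub hindL_int
  have hle : ∀ y, u y ≤ vU y := by
    intro y
    by_cases hy : y < x + L
    · have : (Ici (x + L)).indicator (fun y => ω (x - y)) y = 0 :=
        indicator_of_notMem (by simpa using hy) _
      simp only [vU, this, add_zero]
      exact mul_le_mul_of_nonneg_right (hfy_le y hy) (hωx_pos y)
    · push_neg at hy
      have : (Ici (x + L)).indicator (fun y => ω (x - y)) y = ω (x - y) :=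
        indicator_of_mem (by simpa using hy) _
      simp only [hu, vU, this]
      nlinarith [hωx_pos y, hb0 y, hb1 y, hb0 x, hb1 x, hDf0]
  have hge : ∀ y, vL y ≤ u y := by
    intro y
    by_cases hy : x - L < y
    · have : (Iic (x - L)).indicator (fun y => ω (x - y)) y = 0 :=
        indicator_of_notMem (by simpa using hy) _
      simp only [hu, vL, this, sub_zero]
      have := mul_le_mul_of_nonneg_right (hfy_ge y hy) (hωx_pos y)
      nlinarith [hωx_pos y]
    · push_neg at hy
      have : (Iic (x - L)).indicator (fun y => ω (x - y)) y = ω (x - y) :=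
        indicator_of_mem (by simpa using hy) _
      simp only [hu, vL, this]
      nlinarith [hωx_pos y, hb0 y, hb1 y, hb0 x, hb1 x, hDf0]
  have hconv : conv f ω x - f x = ∫ y, u y := by
    have hf_int : Integrable (fun y => f y * ω (x - y)) :=
      hωx_int.bdd_mul hfm.aestronglyMeasurable
        (c := 1) (Eventually.of_forall fun y => by rw [Real.norm_eq_abs, abs_of_nonneg (hb0 y)]; exact hb1 y)
    have : (∫ y, u y) = (∫ y, f y * ω (x - y)) - ∫ y, f x * ω (x - y) := by
      rw [← integral_sub hf_int (hωx_int.const_mul (f x))]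
      congr 1; ext y; simp [hu]; ring
    rw [this, conv, integral_const_mul, hωx_one, mul_one]
  have hIU : (∫ y, vU y) = Df + e := by
    rw [integral_add (hωx_int.const_mul Df) hindU_int, integral_const_mul, hωx_one, mul_one,
      integral_indicator measurableSet_Ici, tail_integral ω hev x L]
  have hIL : (∫ y, vL y) = -(Df + e) := by
    have hveq : vL = fun y => -(Df * ω (x - y) + (Iic (x - L)).indicator (fun y => ω (x - y)) y) := by
      funext y; simp only [vL]; ring
    rw [hveq, integral_neg, integral_add (hωx_int.const_mul Df) hindL_int, integral_const_mul,
      hωx_one, mul_one, integral_indicator measurableSet_Iic, tail_integral' ω x L]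
  rw [hconv, abs_le]
  constructor
  · have := integral_mono hvL_int hu_int hge
    rw [hIL] at this; linarith
  · have := integral_mono hu_int hvU_int hle
    rw [hIU] at this; linarith

lemma stieltjes_Ioc {f : ℝ → ℝ} (hm : Monotone f) (a b : ℝ) (hab : a ≤ b) :
    stieltjesOf f (Ioc a b) = ENNReal.ofReal (rlim f b - rlim f a) := by
  rw [stieltjesOf, dif_pos hm, StieltjesFunction.measure_Ioc,
    hm.stieltjesFunction_eq, hm.stieltjesFunction_eq, rlim_eq hm, rlim_eq hm]

/-- key inner-integral bound -/
lemma inner_bound {f g : ℝ → ℝ} (hfm : Monotone f) (hgm : Monotone g)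
    (hg0 : ∀ y, 0 ≤ g y) (x t : ℝ) (ht : 0 < t) :
    0 ≤ sInteg f (fun y => rlim g x - g (y - t)) x (x + t) ∧
      sInteg f (fun y => rlim g x - g (y - t)) x (x + t) ≤
        (rlim g x - rlim g (x - t)) * (rlim f (x + t) - rlim f x) := by
  have hxx : x ≤ x + t := by linarith
  have hmeas : stieltjesOf f (Ioc x (x + t)) = ENNReal.ofReal (rlim f (x + t) - rlim f x) :=
    stieltjes_Ioc hfm x (x + t) hxx
  have hrmono : rlim f x ≤ rlim f (x + t) := by
    rw [rlim_eq hfm, rlim_eq hfm]; exact hfm.rightLim (by linarith)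
  have hC0 : 0 ≤ rlim g x - rlim g (x - t) := by
    rw [rlim_eq hgm, rlim_eq hgm, sub_nonneg]; exact hgm.rightLim (by linarith)
  have hub : ∀ y ∈ Ioc x (x + t), rlim g x - g (y - t) ≤ rlim g x - rlim g (x - t) := by
    intro y hy
    have : rlim g (x - t) ≤ g (y - t) := by
      rw [rlim_eq hgm]; exact hgm.rightLim_le (by linarith [hy.1])
    linarith
  have hlb : ∀ y ∈ Ioc x (x + t), 0 ≤ rlim g x - g (y - t) := by
    intro y hy
    have : g (y - t) ≤ rlim g x := by
      rw [rlim_eq hgm]; exact hgm.le_rightLim (by linarith [hy.2])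
    linarith
  rw [sInteg, if_pos hxx]
  constructor
  · exact setIntegral_nonneg measurableSet_Ioc hlb
  · have hfin : stieltjesOf f (Ioc x (x + t)) < ⊤ := by
      rw [hmeas]; exact ENNReal.ofReal_lt_top
    have hmble : AEStronglyMeasurable (fun y => rlim g x - g (y - t))
        ((stieltjesOf f).restrict (Ioc x (x + t))) :=
      (measurable_const.sub (hgm.measurable.comp (measurable_sub_const t))).aestronglyMeasurable
    have hnorm := norm_setIntegral_le_of_norm_le_const (μ := stieltjesOf f)
      (s := Ioc x (x + t)) (C := rlim g x - rlim g (x - t)) hfin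
      (fun y hy => by
        rw [Real.norm_eq_abs, abs_of_nonneg (hlb y hy)]; exact hub y hy)
    calc (∫ y in Ioc x (x + t), (rlim g x - g (y - t)) ∂(stieltjesOf f))
        ≤ ‖∫ y in Ioc x (x + t), (rlim g x - g (y - t)) ∂(stieltjesOf f)‖ := le_abs_self _
      _ ≤ (rlim g x - rlim g (x - t)) * (stieltjesOf f (Ioc x (x + t))).toReal := hnorm
      _ = (rlim g x - rlim g (x - t)) * (rlim f (x + t) - rlim f x) := by
          rw [hmeas, ENNReal.toReal_ofReal (by linarith)]

lemma rlim_mem {f : ℝ → ℝ} (hm : Monotone f) (hb : ∀ y, f y ∈ Icc (0:ℝ) 1) (z : ℝ) :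
    rlim f z ∈ Icc (0:ℝ) 1 := by
  rw [rlim_eq hm]
  constructor
  · exact le_trans (hb z).1 (hm.le_rightLim le_rfl)
  · exact le_trans (hm.rightLim_le (lt_add_one z)) (hb (z + 1)).2

theorem xi_bound
    (ω f g : ℝ → ℝ)
    (hω : IsAveragingKernel ω) (hfΨ : MemPsi f) (hgΨ : MemPsi g)
    (L : ℝ) (hL : 0 < L) (x : ℝ) :
    Xi ω f g x x ≤
        (llim f (x + L) - rlim f (x - L)) * (llim g (x + L) - rlim g (x - L)) +
          ∫ y in Ioi L, ω y := by
  obtain ⟨hev, hpos, _, hint, hone⟩ := hω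
  obtain ⟨hfm, hfb⟩ := hfΨ
  obtain ⟨hgm, hgb⟩ := hgΨ
  set Df := llim f (x + L) - rlim f (x - L) with hDf
  set Dg := llim g (x + L) - rlim g (x - L) with hDg
  have hDf0 : 0 ≤ Df := by
    rw [hDf, llim_eq hfm, rlim_eq hfm, sub_nonneg]
    exact hfm.rightLim_le_leftLim (by linarith)
  have hDg0 : 0 ≤ Dg := by
    rw [hDg, llim_eq hgm, rlim_eq hgm, sub_nonneg]
    exact hgm.rightLim_le_leftLim (by linarith)
  -- increments bounded by D when t < L
  have hfInc : ∀ t : ℝ, 0 < t → t < L → rlim f (x + t) - rlim f (x - t) ≤ Df := by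
    intro t ht htL
    have h1 : rlim f (x + t) ≤ llim f (x + L) := by
      rw [rlim_eq hfm, llim_eq hfm]
      exact hfm.rightLim_le_leftLim (by linarith)
    have h2 : rlim f (x - L) ≤ rlim f (x - t) := by
      rw [rlim_eq hfm, rlim_eq hfm]; exact hfm.rightLim (by linarith)
    rw [hDf]; linarith
  have hgInc : ∀ t : ℝ, 0 < t → t < L → rlim g (x + t) - rlim g (x - t) ≤ Dg := by
    intro t ht htL
    have h1 : rlim g (x + t) ≤ llim g (x + L) := by
      rw [rlim_eq hgm, llim_eq hgm]
      exact hgm.rightLim_le_leftLim (by linarith)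
    have h2 : rlim g (x - L) ≤ rlim g (x - t) := by
      rw [rlim_eq hgm, rlim_eq hgm]; exact hgm.rightLim (by linarith)
    rw [hDg]; linarith
  set S1 : ℝ → ℝ := fun t => sInteg f (fun y => rlim g x - g (y - t)) x (x + t) with hS1
  set S2 : ℝ → ℝ := fun t => sInteg g (fun y => rlim f x - f (y - t)) x (x + t) with hS2
  set c : ℝ → ℝ := fun t => if t < L then Df * Dg else 1 with hc
  set v : ℝ → ℝ := fun t => c t * ω t with hv
  have hc_meas : Measurable c := by
    apply Measurable.ite _ measurable_const measurable_const
    exact measurableSet_Iio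
  have hv_int : Integrable v :=
    hint.bdd_mul hc_meas.aestronglyMeasurable
      (c := max (Df * Dg) 1) (Eventually.of_forall fun t => by
        rw [hc, Real.norm_eq_abs]
        by_cases h : t < L
        · simp only [if_pos h]; rw [abs_of_nonneg (mul_nonneg hDf0 hDg0)]; exact le_max_left _ _
        · simp only [if_neg h]; rw [abs_one]; exact le_max_right _ _)
  -- pointwise bounds on Ioi 0
  have hn1 : ∀ t ∈ Ioi (0:ℝ), 0 ≤ ω t * S1 t := fun t ht =>
    mul_nonneg (hpos t) (inner_bound hfm hgm (fun y => (hgb y).1) x t ht).1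
  have hn2 : ∀ t ∈ Ioi (0:ℝ), 0 ≤ ω t * S2 t := fun t ht =>
    mul_nonneg (hpos t) (inner_bound hgm hfm (fun y => (hfb y).1) x t ht).1
  have hpt : ∀ t ∈ Ioi (0:ℝ), ω t * S1 t + ω t * S2 t ≤ v t := by
    intro t ht
    simp only [mem_Ioi] at ht
    obtain ⟨h1n, h1u⟩ := inner_bound hfm hgm (fun y => (hgb y).1) x t ht
    obtain ⟨h2n, h2u⟩ := inner_bound hgm hfm (fun y => (hfb y).1) x t ht
    set A1 := rlim f x - rlim f (x - t) with hA1
    set A2 := rlim f (x + t) - rlim f x with hA2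
    set B1 := rlim g x - rlim g (x - t) with hB1
    set B2 := rlim g (x + t) - rlim g x with hB2
    have hA1n : 0 ≤ A1 := by
      rw [hA1, sub_nonneg, rlim_eq hfm, rlim_eq hfm]; exact hfm.rightLim (by linarith)
    have hA2n : 0 ≤ A2 := by
      rw [hA2, sub_nonneg, rlim_eq hfm, rlim_eq hfm]; exact hfm.rightLim (by linarith)
    have hB1n : 0 ≤ B1 := by
      rw [hB1, sub_nonneg, rlim_eq hgm, rlim_eq hgm]; exact hgm.rightLim (by linarith)
    have hB2n : 0 ≤ B2 := by
      rw [hB2, sub_nonneg, rlim_eq hgm, rlim_eq hgm]; exact hgm.rightLim (by linarith)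
    have hsum : S1 t + S2 t ≤ (A1 + A2) * (B1 + B2) := by
      have e1 : S1 t ≤ B1 * A2 := h1u
      have e2 : S2 t ≤ A1 * B2 := h2u
      nlinarith [mul_nonneg hA1n hB1n, mul_nonneg hA2n hB2n]
    have hcb : (A1 + A2) * (B1 + B2) ≤ c t := by
      rw [hc]
      by_cases htL : t < L
      · simp only [if_pos htL]
        have hfi : A1 + A2 ≤ Df := by
          have := hfInc t ht htL; rw [hA1, hA2]; linarith
        have hgi : B1 + B2 ≤ Dg := by
          have := hgInc t ht htL; rw [hB1, hB2]; linarith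
        exact mul_le_mul hfi hgi (by linarith) hDf0
      · simp only [if_neg htL]
        have hf1 : A1 + A2 ≤ 1 := by
          have := (rlim_mem hfm hfb (x + t)).2
          have := (rlim_mem hfm hfb (x - t)).1
          rw [hA1, hA2]; linarith
        have hg1 : B1 + B2 ≤ 1 := by
          have := (rlim_mem hgm hgb (x + t)).2
          have := (rlim_mem hgm hgb (x - t)).1
          rw [hB1, hB2]; linarith
        nlinarith
    calc ω t * S1 t + ω t * S2 t = ω t * (S1 t + S2 t) := by ring
      _ ≤ ω t * ((A1 + A2) * (B1 + B2)) := mul_le_mul_of_nonneg_left hsum (hpos t)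
      _ ≤ ω t * c t := mul_le_mul_of_nonneg_left hcb (hpos t)
      _ = v t := by rw [hv]; ring
  -- combine the two outer integrals
  have hXi : Xi ω f g x x =
      (∫ t in Ioi (0:ℝ), ω t * S1 t) + ∫ t in Ioi (0:ℝ), ω t * S2 t := rfl
  have hmain : Xi ω f g x x ≤ ∫ t in Ioi (0:ℝ), v t := by
    rw [hXi]
    by_cases h1 : IntegrableOn (fun t => ω t * S1 t) (Ioi 0) volume <;>
      by_cases h2 : IntegrableOn (fun t => ω t * S2 t) (Ioi 0) volume
    · calc (∫ t in Ioi (0:ℝ), ω t * S1 t) + ∫ t in Ioi (0:ℝ), ω t * S2 t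
          = ∫ t in Ioi (0:ℝ), (ω t * S1 t + ω t * S2 t) := (integral_add h1 h2).symm
        _ ≤ ∫ t in Ioi (0:ℝ), v t :=
            setIntegral_mono_on (h1.add h2) hv_int.integrableOn measurableSet_Ioi hpt
    · rw [integral_undef h2, add_zero]
      exact setIntegral_mono_on h1 hv_int.integrableOn measurableSet_Ioi
        (fun t ht => le_trans (by linarith [hn2 t ht]) (hpt t ht))
    · rw [integral_undef h1, zero_add]
      exact setIntegral_mono_on h2 hv_int.integrableOn measurableSet_Ioi
        (fun t ht => le_trans (by linarith [hn1 t ht]) (hpt t ht))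
    · rw [integral_undef h1, integral_undef h2, add_zero]
      exact setIntegral_nonneg measurableSet_Ioi
        (fun t ht => le_trans (le_trans (hn1 t ht) (by linarith [hn2 t ht])) (hpt t ht))
  refine le_trans hmain ?_
  -- compute the integral of v
  have hsplit : Ioi (0:ℝ) = Ioo 0 L ∪ Ici L := by
    ext t; simp only [mem_Ioi, mem_union, mem_Ioo, mem_Ici]
    constructor
    · intro h; rcases lt_or_ge t L with h' | h'
      · exact Or.inl ⟨h, h'⟩
      · exact Or.inr h'
    · rintro (⟨h, _⟩ | h) <;> linarith
  have hdisj : Disjoint (Ioo (0:ℝ) L) (Ici L) := by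
    rw [disjoint_left]; rintro t ⟨_, h2⟩ h3; exact absurd h3 (not_le.mpr h2)
  rw [hsplit, setIntegral_union hdisj measurableSet_Ici hv_int.integrableOn hv_int.integrableOn]
  have hIoo : (∫ t in Ioo (0:ℝ) L, v t) ≤ Df * Dg := by
    have : (∫ t in Ioo (0:ℝ) L, v t) = ∫ t in Ioo (0:ℝ) L, Df * Dg * ω t := by
      apply setIntegral_congr_fun measurableSet_Ioo
      intro t ht; rw [hv, hc]; simp [if_pos ht.2]
    rw [this, integral_const_mul]
    have hle1 : (∫ t in Ioo (0:ℝ) L, ω t) ≤ 1 := by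
      rw [← hone]
      exact setIntegral_le_integral hint (Eventually.of_forall hpos)
    have hω_nn : (0:ℝ) ≤ ∫ t in Ioo (0:ℝ) L, ω t :=
      setIntegral_nonneg measurableSet_Ioo (fun t _ => hpos t)
    nlinarith [mul_nonneg hDf0 hDg0]
  have hIci : (∫ t in Ici L, v t) = ∫ y in Ioi L, ω y := by
    have : (∫ t in Ici L, v t) = ∫ t in Ici L, ω t := by
      apply setIntegral_congr_fun measurableSet_Ici
      intro t ht; rw [hv, hc]; simp [if_neg (not_lt.mpr (mem_Ici.mp ht))]
    rw [this]; exact integral_Ici_eq_integral_Ioi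
  rw [hIci]; linarith

/-- **Transition potential bounds.** -/
theorem transition_potential_bounds
    (ω f g : ℝ → ℝ)
    (hω : IsAveragingKernel ω) (hfΨ : MemPsi f) (hgΨ : MemPsi g)
    (L : ℝ) (hL : 0 < L) (x : ℝ) :
    Xi ω f g x x ≤
        (llim f (x + L) - rlim f (x - L)) * (llim g (x + L) - rlim g (x - L)) +
          ∫ y in Ioi L, ω y ∧
      |conv f ω x - f x| ≤
        (llim f (x + L) - rlim f (x - L)) + ∫ y in Ioi L, ω y := by
  exact ⟨xi_bound ω f g hω hfΨ hgΨ L hL x, conv_bound ω f hω hfΨ L hL x⟩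
end
end

section
/- Invariance of fixed point potential. Let (hf, hg) ∈ 𝒳², let ω be an averaging kernel, let α ∈ ℝ, and let (f, g) ∈ Ψ² be a consistent travelling-wave solution with shift α. Then: (A) (g(−∞), f(−∞)) is a crossing point of (hf, hg); (B) (g(+∞), f(+∞)) is a crossing point of (hf, hg); (C) if α = 0 then Φ(hf, hg; g(−∞), f(−∞)) = Φ(hf, hg; g(+∞), f(+∞)). -/
open MeasureTheory Filter Set

noncomputable section

/-- `(f, g)` is a consistent travelling-wave solution with shift `α` for `(hf, hg)`
and kernel `ω`. -/
def ConsistentWave (hf hg f g ω : ℝ → ℝ) (α : ℝ) : Prop :=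
  (∀ x, f x ∈ Icc (lm hf (conv g ω (x + α))) (rm hf (conv g ω (x + α)))) ∧
    (∀ x, g x ∈ Icc (lm hg (conv f ω x)) (rm hg (conv f ω x)))
section Aux

variable {f g p h ω : ℝ → ℝ}

lemma memPsi_range_bddAbove (hf : MemPsi f) : BddAbove (Set.range f) :=
  ⟨1, by rintro y ⟨x, rfl⟩; exact (hf.2 x).2⟩

lemma memPsi_range_bddBelow (hf : MemPsi f) : BddBelow (Set.range f) :=
  ⟨0, by rintro y ⟨x, rfl⟩; exact (hf.2 x).1⟩

lemma MemPsi.le_limTop (hf : MemPsi f) (x : ℝ) : f x ≤ limTop f :=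
  le_csSup (memPsi_range_bddAbove hf) ⟨x, rfl⟩

lemma MemPsi.limBot_le (hf : MemPsi f) (x : ℝ) : limBot f ≤ f x :=
  csInf_le (memPsi_range_bddBelow hf) ⟨x, rfl⟩

lemma MemPsi.limBot_mem (hf : MemPsi f) : limBot f ∈ Icc (0:ℝ) 1 :=
  ⟨le_csInf ⟨f 0, ⟨0, rfl⟩⟩ (by rintro y ⟨x, rfl⟩; exact (hf.2 x).1),
   (hf.limBot_le 0).trans (hf.2 0).2⟩

lemma MemPsi.limTop_mem (hf : MemPsi f) : limTop f ∈ Icc (0:ℝ) 1 :=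
  ⟨(hf.2 0).1.trans (hf.le_limTop 0),
   csSup_le ⟨f 0, ⟨0, rfl⟩⟩ (by rintro y ⟨x, rfl⟩; exact (hf.2 x).2)⟩

lemma MemPsi.limBot_le_limTop (hf : MemPsi f) : limBot f ≤ limTop f :=
  (hf.limBot_le 0).trans (hf.le_limTop 0)

lemma MemPsi.tendsto_atBot (hf : MemPsi f) : Filter.Tendsto f atBot (nhds (limBot f)) :=
  tendsto_atBot_ciInf hf.1 (memPsi_range_bddBelow hf)

lemma MemPsi.tendsto_atTop (hf : MemPsi f) : Filter.Tendsto f atTop (nhds (limTop f)) :=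
  tendsto_atTop_ciSup hf.1 (memPsi_range_bddAbove hf)

lemma MemPsi.mem_limIcc (hf : MemPsi f) (x : ℝ) : f x ∈ Icc (limBot f) (limTop f) :=
  ⟨hf.limBot_le x, hf.le_limTop x⟩

/-- An averaging kernel is measurable (being of bounded variation). -/
lemma IsAveragingKernel.measurable (hω : IsAveragingKernel ω) : Measurable ω := by
  obtain ⟨p, q, hp, hq, hpq⟩ :=
    hω.2.2.1.locallyBoundedVariationOn.exists_monotoneOn_sub_monotoneOn
  rw [monotoneOn_univ] at hp hq
  rw [hpq]
  exact (hp.measurable).sub (hq.measurable)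

lemma IsAveragingKernel.integrable_shift (hω : IsAveragingKernel ω) (c : ℝ) :
    MeasureTheory.Integrable (fun y => ω (c - y)) :=
  hω.2.2.2.1.comp_sub_left c

lemma IsAveragingKernel.integral_shift (hω : IsAveragingKernel ω) (c : ℝ) :
    (∫ y : ℝ, ω (c - y)) = 1 := by
  rw [MeasureTheory.integral_sub_left_eq_self ω MeasureTheory.volume c]; exact hω.2.2.2.2

lemma MemPsi.integrable_mul_shift (hf : MemPsi f) (hω : IsAveragingKernel ω) (c : ℝ) :
    MeasureTheory.Integrable (fun y => f y * ω (c - y)) := by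
  refine ((hω.integrable_shift c).abs).mono' ?_ ?_
  · exact ((hf.1.measurable).mul
      (hω.measurable.comp (measurable_const.sub measurable_id))).aestronglyMeasurable
  · refine Filter.Eventually.of_forall (fun y => ?_)
    have h1 : |f y| ≤ 1 := abs_le.2 ⟨by linarith [(hf.2 y).1], (hf.2 y).2⟩
    calc ‖f y * ω (c - y)‖ = |f y| * |ω (c - y)| := abs_mul _ _
      _ ≤ 1 * |ω (c - y)| := by
          exact mul_le_mul_of_nonneg_right h1 (abs_nonneg _)
      _ = |ω (c - y)| := one_mul _

lemma conv_comp (f ω : ℝ → ℝ) (x : ℝ) : conv f ω x = ∫ t : ℝ, f (x - t) * ω t := by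
  rw [conv, ← MeasureTheory.integral_sub_left_eq_self (fun t => f (x - t) * ω t)
    MeasureTheory.volume x]
  congr 1; ext y; simp

lemma conv_mem (hf : MemPsi f) (hω : IsAveragingKernel ω) (x : ℝ) :
    conv f ω x ∈ Icc (0:ℝ) 1 := by
  constructor
  · exact MeasureTheory.integral_nonneg
      (fun y => mul_nonneg (hf.2 y).1 (hω.2.1 _))
  · have h1 : conv f ω x ≤ ∫ y : ℝ, ω (x - y) := by
      refine MeasureTheory.integral_mono (hf.integrable_mul_shift hω x)
        (hω.integrable_shift x) (fun y => ?_)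
      have := mul_le_mul_of_nonneg_right (hf.2 y).2 (hω.2.1 (x - y))
      simpa using this
    exact h1.trans (le_of_eq (hω.integral_shift x))

lemma conv_monotone (hf : MemPsi f) (hω : IsAveragingKernel ω) : Monotone (conv f ω) := by
  intro x x' hx
  rw [conv_comp, conv_comp]
  have hi : ∀ z : ℝ, MeasureTheory.Integrable (fun t => f (z - t) * ω t) := by
    intro z
    refine (hω.2.2.2.1.abs).mono' ?_ ?_
    · exact ((hf.1.measurable.comp (measurable_const.sub measurable_id)).mul
        hω.measurable).aestronglyMeasurable
    · refine Filter.Eventually.of_forall (fun t => ?_)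
      have h1 : |f (z - t)| ≤ 1 := abs_le.2 ⟨by linarith [(hf.2 (z-t)).1], (hf.2 (z-t)).2⟩
      calc ‖f (z - t) * ω t‖ = |f (z - t)| * |ω t| := abs_mul _ _
        _ ≤ 1 * |ω t| := mul_le_mul_of_nonneg_right h1 (abs_nonneg _)
        _ = |ω t| := one_mul _
  refine MeasureTheory.integral_mono (hi x) (hi x') (fun t => ?_)
  exact mul_le_mul_of_nonneg_right (hf.1 (by linarith : x - t ≤ x' - t)) (hω.2.1 t)

end Aux
section Aux2

variable {f g p h ω : ℝ → ℝ}

lemma integrable_comp_mul (hf : MemPsi f) (hω : IsAveragingKernel ω) (z : ℝ) :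
    MeasureTheory.Integrable (fun t => f (z - t) * ω t) := by
  refine (hω.2.2.2.1.abs).mono' ?_ ?_
  · exact ((hf.1.measurable.comp (measurable_const.sub measurable_id)).mul
      hω.measurable).aestronglyMeasurable
  · refine Filter.Eventually.of_forall (fun t => ?_)
    have h1 : |f (z - t)| ≤ 1 := abs_le.2 ⟨by linarith [(hf.2 (z-t)).1], (hf.2 (z-t)).2⟩
    calc ‖f (z - t) * ω t‖ = |f (z - t)| * |ω t| := abs_mul _ _
      _ ≤ 1 * |ω t| := mul_le_mul_of_nonneg_right h1 (abs_nonneg _)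
      _ = |ω t| := one_mul _

lemma conv_continuous (hf : MemPsi f) (hω : IsAveragingKernel ω) :
    Continuous (conv f ω) := by
  have hconv : conv f ω = fun x => ∫ t : ℝ, f (x - t) * ω t := funext (conv_comp f ω)
  rw [hconv, continuous_iff_continuousAt]
  intro x₀
  have hD : {x : ℝ | ¬ContinuousAt f x}.Countable := hf.1.countable_not_continuousAt
  have hN : ((fun t : ℝ => x₀ - t) ⁻¹' {x : ℝ | ¬ContinuousAt f x}).Countable :=
    hD.preimage (fun a b hab => by linarith [hab] )
  unfold ContinuousAt
  refine MeasureTheory.tendsto_integral_filter_of_dominated_convergence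
    (fun t => |ω t|) ?_ ?_ hω.2.2.2.1.abs ?_
  · exact Filter.Eventually.of_forall (fun x =>
      ((hf.1.measurable.comp (measurable_const.sub measurable_id)).mul
        hω.measurable).aestronglyMeasurable)
  · refine Filter.Eventually.of_forall (fun x => Filter.Eventually.of_forall (fun t => ?_))
    have h1 : |f (x - t)| ≤ 1 := abs_le.2 ⟨by linarith [(hf.2 (x-t)).1], (hf.2 (x-t)).2⟩
    calc ‖f (x - t) * ω t‖ = |f (x - t)| * |ω t| := abs_mul _ _
      _ ≤ 1 * |ω t| := mul_le_mul_of_nonneg_right h1 (abs_nonneg _)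
      _ = |ω t| := one_mul _
  · have hnull : MeasureTheory.volume
        ((fun t : ℝ => x₀ - t) ⁻¹' {x : ℝ | ¬ContinuousAt f x}) = 0 :=
      hN.measure_zero _
    filter_upwards [MeasureTheory.measure_eq_zero_iff_ae_notMem.mp hnull] with t ht
    have hc : ContinuousAt f (x₀ - t) := not_not.mp ht
    have h2 : ContinuousAt (fun x : ℝ => f (x - t)) x₀ := by
      have hs : ContinuousAt (fun x : ℝ => x - t) x₀ :=
        (continuous_id.sub continuous_const).continuousAt
      exact ContinuousAt.comp (x := x₀) (g := f) hc hs
    exact (h2.mul continuousAt_const)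

lemma conv_tendsto_atBot (hf : MemPsi f) (hω : IsAveragingKernel ω) :
    Filter.Tendsto (conv f ω) atBot (nhds (limBot f)) := by
  have hconv : conv f ω = fun x => ∫ t : ℝ, f (x - t) * ω t := funext (conv_comp f ω)
  have hlim : limBot f = ∫ t : ℝ, limBot f * ω t := by
    rw [MeasureTheory.integral_const_mul, hω.2.2.2.2, mul_one]
  rw [hconv, hlim]
  refine MeasureTheory.tendsto_integral_filter_of_dominated_convergence
    (fun t => |ω t|) ?_ ?_ hω.2.2.2.1.abs ?_
  · exact Filter.Eventually.of_forall (fun x =>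
      ((hf.1.measurable.comp (measurable_const.sub measurable_id)).mul
        hω.measurable).aestronglyMeasurable)
  · refine Filter.Eventually.of_forall (fun x => Filter.Eventually.of_forall (fun t => ?_))
    have h1 : |f (x - t)| ≤ 1 := abs_le.2 ⟨by linarith [(hf.2 (x-t)).1], (hf.2 (x-t)).2⟩
    calc ‖f (x - t) * ω t‖ = |f (x - t)| * |ω t| := abs_mul _ _
      _ ≤ 1 * |ω t| := mul_le_mul_of_nonneg_right h1 (abs_nonneg _)
      _ = |ω t| := one_mul _
  · refine Filter.Eventually.of_forall (fun t => ?_)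
    have h1 : Filter.Tendsto (fun x : ℝ => x - t) atBot atBot :=
      tendsto_atBot_add_const_right atBot (-t) tendsto_id
    exact (hf.tendsto_atBot.comp h1).mul_const (ω t)

lemma conv_tendsto_atTop (hf : MemPsi f) (hω : IsAveragingKernel ω) :
    Filter.Tendsto (conv f ω) atTop (nhds (limTop f)) := by
  have hconv : conv f ω = fun x => ∫ t : ℝ, f (x - t) * ω t := funext (conv_comp f ω)
  have hlim : limTop f = ∫ t : ℝ, limTop f * ω t := by
    rw [MeasureTheory.integral_const_mul, hω.2.2.2.2, mul_one]
  rw [hconv, hlim]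
  refine MeasureTheory.tendsto_integral_filter_of_dominated_convergence
    (fun t => |ω t|) ?_ ?_ hω.2.2.2.1.abs ?_
  · exact Filter.Eventually.of_forall (fun x =>
      ((hf.1.measurable.comp (measurable_const.sub measurable_id)).mul
        hω.measurable).aestronglyMeasurable)
  · refine Filter.Eventually.of_forall (fun x => Filter.Eventually.of_forall (fun t => ?_))
    have h1 : |f (x - t)| ≤ 1 := abs_le.2 ⟨by linarith [(hf.2 (x-t)).1], (hf.2 (x-t)).2⟩
    calc ‖f (x - t) * ω t‖ = |f (x - t)| * |ω t| := abs_mul _ _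
      _ ≤ 1 * |ω t| := mul_le_mul_of_nonneg_right h1 (abs_nonneg _)
      _ = |ω t| := one_mul _
  · refine Filter.Eventually.of_forall (fun t => ?_)
    have h1 : Filter.Tendsto (fun x : ℝ => x - t) atTop atTop :=
      tendsto_atTop_add_const_right atTop (-t) tendsto_id
    exact (hf.tendsto_atTop.comp h1).mul_const (ω t)

end Aux2
section Aux3

variable {f g p h ω : ℝ → ℝ}

lemma lm_le_of_lt (hh : MemX h) {u u' : ℝ} (h0 : 0 ≤ u') (hu : u' < u) (hu1 : u ≤ 1) :
    h u' ≤ lm h u := by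
  rw [lm, if_neg (not_le.2 (lt_of_le_of_lt h0 hu))]
  refine le_csSup ?_ ⟨u', ⟨h0, hu⟩, rfl⟩
  refine ⟨1, ?_⟩
  rintro y ⟨z, hz, rfl⟩
  exact (hh.2 ⟨hz.1, (le_of_lt hz.2).trans hu1⟩).2

lemma rm_le_of_lt (hh : MemX h) {u u' : ℝ} (h0 : 0 ≤ u) (hu : u < u') (hu1 : u' ≤ 1) :
    rm h u ≤ h u' := by
  rw [rm, if_neg (not_le.2 (lt_of_lt_of_le hu hu1))]
  refine csInf_le ?_ ⟨u', ⟨hu, hu1⟩, rfl⟩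
  refine ⟨0, ?_⟩
  rintro y ⟨z, hz, rfl⟩
  exact (hh.2 ⟨h0.trans (le_of_lt hz.1), hz.2⟩).1

/-- Limits of a consistent relation are again consistent. -/
lemma cross_limit (hh : MemX h) {P : ℝ → ℝ} {l : Filter ℝ} [l.NeBot] {u₀ v₀ : ℝ}
    (hP1 : ∀ x, P x ∈ Icc (0:ℝ) 1)
    (hp : MemPsi p)
    (hfge : ∀ x, p x ∈ Icc (lm h (P x)) (rm h (P x)))
    (hVt : Filter.Tendsto P l (nhds u₀)) (hpt : Filter.Tendsto p l (nhds v₀))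
    (hv₀ : v₀ ∈ Icc (0:ℝ) 1) :
    v₀ ∈ Icc (lm h u₀) (rm h u₀) := by
  constructor
  · rcases le_or_gt u₀ 0 with h0 | h0
    · rw [lm, if_pos h0]; exact hv₀.1
    · rw [lm, if_neg (not_le.2 h0)]
      refine csSup_le ⟨h 0, 0, ⟨le_refl 0, h0⟩, rfl⟩ ?_
      rintro _ ⟨u', hu', rfl⟩
      have ev : ∀ᶠ x in l, h u' ≤ p x := by
        filter_upwards [hVt.eventually (eventually_gt_nhds hu'.2)] with x hx
        exact le_trans (lm_le_of_lt hh hu'.1 hx (hP1 x).2) (hfge x).1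
      exact ge_of_tendsto hpt ev
  · rcases le_or_gt 1 u₀ with h1 | h1
    · rw [rm, if_pos h1]; exact hv₀.2
    · rw [rm, if_neg (not_le.2 h1)]
      refine le_csInf ⟨h 1, 1, ⟨h1, le_refl 1⟩, rfl⟩ ?_
      rintro _ ⟨u', hu', rfl⟩
      have ev : ∀ᶠ x in l, p x ≤ h u' := by
        filter_upwards [hVt.eventually (eventually_lt_nhds hu'.1)] with x hx
        exact (hfge x).2.trans (rm_le_of_lt hh (hP1 x).1 hx hu'.2)
      exact le_of_tendsto hpt ev

end Aux3
section Aux4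

variable {f g p h ω : ℝ → ℝ}

lemma Xinv_bddBelow (h : ℝ → ℝ) (v : ℝ) :
    BddBelow ({1} ∪ {u ∈ Icc (0:ℝ) 1 | v ≤ h u}) := by
  refine ⟨0, ?_⟩
  rintro b (hb | hb)
  · rw [Set.mem_singleton_iff] at hb; rw [hb]; norm_num
  · exact hb.1.1

lemma Xinv_nonneg (h : ℝ → ℝ) (v : ℝ) : 0 ≤ Xinv h v := by
  refine le_csInf ⟨1, Or.inl rfl⟩ ?_
  rintro b (hb | hb)
  · rw [Set.mem_singleton_iff] at hb; rw [hb]; norm_num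
  · exact hb.1.1

lemma Xinv_le_one (h : ℝ → ℝ) (v : ℝ) : Xinv h v ≤ 1 :=
  csInf_le (Xinv_bddBelow h v) (Or.inl rfl)

lemma Xinv_monotone (h : ℝ → ℝ) : Monotone (Xinv h) := by
  intro v v' hvv'
  refine csInf_le_csInf (Xinv_bddBelow h v) ⟨1, Or.inl rfl⟩ ?_
  rintro b (hb | hb)
  · exact Or.inl hb
  · exact Or.inr ⟨hb.1, hvv'.trans hb.2⟩

/-- The generalized inverse (quantile) of `p`, made globally measurable. -/
def quant (p : ℝ → ℝ) (v : ℝ) : ℝ :=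
  if limBot p < v ∧ v < limTop p then sSup {x | p x < v} else 0

lemma quant_eq {v : ℝ} (hv : v ∈ Ioo (limBot p) (limTop p)) :
    quant p v = sSup {x | p x < v} := if_pos ⟨hv.1, hv.2⟩

lemma quant_set_nonempty (hp : MemPsi p) {v : ℝ} (hv : limBot p < v) :
    {x | p x < v}.Nonempty := by
  obtain ⟨y, ⟨x, rfl⟩, hy⟩ := exists_lt_of_csInf_lt (Set.range_nonempty p) hv
  exact ⟨x, hy⟩

lemma quant_set_bddAbove (hp : MemPsi p) {v : ℝ} (hv : v < limTop p) :
    BddAbove {x | p x < v} := by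
  obtain ⟨y, ⟨x₀, rfl⟩, hy⟩ := exists_lt_of_lt_csSup (Set.range_nonempty p) hv
  refine ⟨x₀, fun x hx => ?_⟩
  by_contra hc
  push_neg at hc
  exact absurd (lt_of_le_of_lt (hp.1 hc.le) hx) (not_lt.2 hy.le)

lemma quant_measurable (hp : MemPsi p) : Measurable (quant p) := by
  refine measurable_of_Iio (fun t => ?_)
  have hset : quant p ⁻¹' Iio t =
      ({v ∈ Ioo (limBot p) (limTop p) | sSup {x | p x < v} < t}) ∪
        (if (0:ℝ) < t then (Ioo (limBot p) (limTop p))ᶜ else ∅) := by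
    ext v
    by_cases hv : limBot p < v ∧ v < limTop p
    · simp only [Set.mem_preimage, Set.mem_Iio, quant, if_pos hv, Set.mem_union,
        Set.mem_setOf_eq, Set.mem_Ioo, Set.mem_compl_iff]
      constructor
      · intro hlt; exact Or.inl ⟨hv, hlt⟩
      · rintro (h1 | h1)
        · exact h1.2
        · split at h1
          · exact absurd hv (by simpa using h1)
          · exact absurd h1 (Set.notMem_empty v)
    · simp only [Set.mem_preimage, Set.mem_Iio, quant, if_neg hv, Set.mem_union,
        Set.mem_setOf_eq, Set.mem_Ioo, Set.mem_compl_iff]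
      constructor
      · intro hlt
        refine Or.inr ?_
        rw [if_pos hlt]
        simpa using hv
      · rintro (h1 | h1)
        · exact absurd h1.1 hv
        · split at h1
          · assumption
          · exact absurd h1 (Set.notMem_empty v)
  rw [hset]
  refine MeasurableSet.union ?_ ?_
  · refine Set.OrdConnected.measurableSet ?_
    constructor
    rintro x ⟨hx1, hx2⟩ y ⟨hy1, hy2⟩ z hz
    refine ⟨⟨lt_of_lt_of_le hx1.1 hz.1, lt_of_le_of_lt hz.2 hy1.2⟩, ?_⟩
    refine lt_of_le_of_lt ?_ hy2
    refine csSup_le_csSup (quant_set_bddAbove hp hy1.2) (quant_set_nonempty hp (lt_of_lt_of_le hx1.1 hz.1)) ?_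
    intro a ha
    exact lt_of_lt_of_le ha hz.2
  · split
    · exact measurableSet_Ioo.compl
    · exact MeasurableSet.empty

/-- Key identity: the canonical inverse of `h` agrees with `P ∘ quant p` on the
interior range of `p`, whenever `p x ∈ [lm h (P x), rm h (P x)]` for all `x`. -/
lemma key1 (hh : MemX h) (hp : MemPsi p) {P : ℝ → ℝ}
    (hPmono : Monotone P) (hPcont : Continuous P) (hPmem : ∀ x, P x ∈ Icc (0:ℝ) 1)
    (hwv : ∀ x, p x ∈ Icc (lm h (P x)) (rm h (P x)))
    {v : ℝ} (hv : v ∈ Ioo (limBot p) (limTop p)) :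
    Xinv h v = P (quant p v) := by
  have hSne : {x | p x < v}.Nonempty := quant_set_nonempty hp hv.1
  have hSbdd : BddAbove {x | p x < v} := quant_set_bddAbove hp hv.2
  set a := sSup {x | p x < v} with ha
  rw [quant_eq hv, ← ha]
  -- upper bound : ∀ y > a, Xinv h v ≤ P y
  have hub : ∀ y, a < y → Xinv h v ≤ P y := by
    intro y hy
    have hpy : v ≤ p y := by
      by_contra hc
      push_neg at hc
      exact absurd (le_csSup hSbdd hc) (not_le.2 hy)
    have h2 := (hwv y).2
    rcases lt_or_ge (P y) 1 with hP1 | hP1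
    · rw [rm, if_neg (not_le.2 hP1)] at h2
      have hbb : BddBelow (h '' Ioc (P y) 1) := by
        refine ⟨0, ?_⟩
        rintro b ⟨z, hz, rfl⟩
        exact (hh.2 ⟨(hPmem y).1.trans hz.1.le, hz.2⟩).1
      have hsub : Ioc (P y) 1 ⊆ {u ∈ Icc (0:ℝ) 1 | v ≤ h u} := by
        intro u hu
        refine ⟨⟨(hPmem y).1.trans hu.1.le, hu.2⟩, ?_⟩
        exact le_trans (hpy.trans h2) (csInf_le hbb ⟨u, hu, rfl⟩)
      have : Xinv h v ≤ sInf (Ioc (P y) 1) := by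
        refine csInf_le_csInf (Xinv_bddBelow h v) ⟨1, hP1, le_refl 1⟩ ?_
        exact fun u hu => Or.inr (hsub hu)
      rwa [csInf_Ioc hP1] at this
    · exact (Xinv_le_one h v).trans hP1
  -- lower bound : ∀ y < a, P y ≤ Xinv h v
  have hlb : ∀ y, y < a → P y ≤ Xinv h v := by
    intro y hy
    obtain ⟨y', hy'S, hyy'⟩ := exists_lt_of_lt_csSup hSne hy
    refine le_trans (hPmono hyy'.le) ?_
    have h1 := (hwv y').1
    rcases le_or_gt (P y') 0 with hP0 | hP0
    · exact hP0.trans (Xinv_nonneg h v)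
    · rw [lm, if_neg (not_le.2 hP0)] at h1
      have hba : BddAbove (h '' Ico 0 (P y')) := by
        refine ⟨1, ?_⟩
        rintro b ⟨z, hz, rfl⟩
        exact (hh.2 ⟨hz.1, hz.2.le.trans (hPmem y').2⟩).2
      refine le_csInf ⟨1, Or.inl rfl⟩ ?_
      rintro b (hb | hb)
      · rw [Set.mem_singleton_iff] at hb; rw [hb]; exact (hPmem y').2
      · by_contra hc
        push_neg at hc
        have hbmem : b ∈ Ico (0:ℝ) (P y') := ⟨hb.1.1, hc⟩
        have : h b < v :=
          lt_of_le_of_lt ((le_csSup hba ⟨b, hbmem, rfl⟩).trans h1) hy'S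
        exact absurd hb.2 (not_le.2 this)
  -- conclude by continuity of P at a
  have hPt : ContinuousAt P a := hPcont.continuousAt
  refine le_antisymm ?_ ?_
  · have ht : Filter.Tendsto P (nhdsWithin a (Ioi a)) (nhds (P a)) :=
      hPt.tendsto.mono_left nhdsWithin_le_nhds
    refine ge_of_tendsto ht ?_
    filter_upwards [self_mem_nhdsWithin] with y hy
    exact hub y hy
  · have ht : Filter.Tendsto P (nhdsWithin a (Iio a)) (nhds (P a)) :=
      hPt.tendsto.mono_left nhdsWithin_le_nhds
    refine le_of_tendsto ht ?_
    filter_upwards [self_mem_nhdsWithin] with y hy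
    exact hlb y hy

end Aux4
section Aux5

open MeasureTheory

variable {f g p h ω : ℝ → ℝ}

/-- The set of flat values of a monotone function is countable. -/
lemma flat_countable (hp : Monotone p) :
    {w | ∃ y₁ y₂, y₁ < y₂ ∧ p y₁ = w ∧ p y₂ = w}.Countable := by
  have hsub : {w | ∃ y₁ y₂, y₁ < y₂ ∧ p y₁ = w ∧ p y₂ = w} ⊆
      p '' (Set.range ((↑) : ℚ → ℝ)) := by
    rintro w ⟨y₁, y₂, h12, h1, h2⟩
    obtain ⟨q, hq1, hq2⟩ := exists_rat_btwn h12
    refine ⟨(q : ℝ), ⟨q, rfl⟩, ?_⟩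
    refine le_antisymm ?_ ?_
    · rw [← h2]; exact hp hq2.le
    · rw [← h1]; exact hp hq1.le
  exact Set.Countable.mono hsub ((Set.countable_range _).image p)

/-- For a.e. `w` in the interior range, `{y | w < p y}` agrees a.e. with `Ioi (quant p w)`. -/
lemma ray_iff (hp : MemPsi p) {w : ℝ} (hw : w ∈ Ioo (limBot p) (limTop p))
    (hflat : ¬ ∃ y₁ y₂, y₁ < y₂ ∧ p y₁ = w ∧ p y₂ = w) :
    ∃ N : Set ℝ, MeasureTheory.volume N = 0 ∧
      ∀ y, y ∉ N → (w < p y ↔ quant p w < y) := by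
  have hSne : {x | p x < w}.Nonempty := quant_set_nonempty hp hw.1
  have hSbdd : BddAbove {x | p x < w} := quant_set_bddAbove hp hw.2
  set b := sSup {x | p x < w} with hb
  have hqb : quant p w = b := quant_eq hw
  have hsub : {y | p y = w}.Subsingleton := by
    intro y₁ hy₁ y₂ hy₂
    by_contra hne
    rcases lt_or_gt_of_ne hne with hlt | hlt
    · exact hflat ⟨y₁, y₂, hlt, hy₁, hy₂⟩
    · exact hflat ⟨y₂, y₁, hlt, hy₂, hy₁⟩
  refine ⟨{b} ∪ {y | p y = w}, ?_, ?_⟩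
  · refine measure_union_null (measure_singleton b) ?_
    exact Set.Countable.measure_zero hsub.countable _
  · intro y hy
    rw [hqb]
    rw [Set.mem_union, not_or] at hy
    have hyb : y ≠ b := fun hc => hy.1 (by rw [hc]; rfl)
    have hyw : p y ≠ w := hy.2
    constructor
    · intro hlt
      have hge : b ≤ y → b ≠ y → b < y := fun h1 h2 => lt_of_le_of_ne h1 h2
      refine hge ?_ (Ne.symm hyb)
      refine csSup_le hSne (fun x hx => ?_)
      by_contra hc
      push_neg at hc
      exact absurd (lt_trans hx hlt) (not_lt.2 (hp.1 hc.le))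
    · intro hlt
      have h1 : ¬ p y < w := by
        intro hc
        exact absurd (le_csSup hSbdd hc) (not_le.2 hlt)
      rcases lt_trichotomy (p y) w with h2 | h2 | h2
      · exact absurd h2 h1
      · exact absurd h2 hyw
      · exact h2

/-- The cumulative distribution of the kernel. -/
def Omg (ω : ℝ → ℝ) (t : ℝ) : ℝ := ∫ z in Iio t, ω z

lemma Omg_mono (hω : IsAveragingKernel ω) : Monotone (Omg ω) := by
  intro t t' ht
  refine setIntegral_mono_set (hω.2.2.2.1.integrableOn) ?_ ?_
  · exact Filter.Eventually.of_forall hω.2.1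
  · exact HasSubset.Subset.eventuallyLE (Iio_subset_Iio ht)

lemma Omg_nonneg (hω : IsAveragingKernel ω) (t : ℝ) : 0 ≤ Omg ω t :=
  setIntegral_nonneg measurableSet_Iio (fun z _ => hω.2.1 z)

lemma Omg_le_one (hω : IsAveragingKernel ω) (t : ℝ) : Omg ω t ≤ 1 := by
  rw [← hω.2.2.2.2]
  exact setIntegral_le_integral hω.2.2.2.1 (Filter.Eventually.of_forall hω.2.1)

lemma Omg_measurable (hω : IsAveragingKernel ω) : Measurable (Omg ω) :=
  (Omg_mono hω).measurable

lemma Omg_add_neg (hω : IsAveragingKernel ω) (t : ℝ) : Omg ω t + Omg ω (-t) = 1 := by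
  have h1 : Omg ω (-t) = ∫ z in Ioi t, ω z := by
    rw [Omg, ← integral_indicator measurableSet_Iio, ← integral_indicator measurableSet_Ioi,
      ← integral_neg_eq_self (fun z => (Iio (-t)).indicator ω z) volume]
    congr 1
    ext z
    by_cases hz : t < z
    · have h2 : -z ∈ Iio (-t) := by simpa using hz
      have h3 : z ∈ Ioi t := hz
      rw [Set.indicator_of_mem h2, Set.indicator_of_mem h3, hω.1]
    · have h2 : -z ∉ Iio (-t) := by simpa using hz
      have h3 : z ∉ Ioi t := hz
      rw [Set.indicator_of_notMem h2, Set.indicator_of_notMem h3]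
  rw [Omg, h1]
  have h4 := integral_add_compl (measurableSet_Iic : MeasurableSet (Iic t)) hω.2.2.2.1
  rw [Set.compl_Iic] at h4
  rw [← integral_Iic_eq_integral_Iio]
  rw [h4, hω.2.2.2.2]

lemma Omg_ray (hω : IsAveragingKernel ω) (c r : ℝ) :
    (∫ y : ℝ, (Ioi r).indicator (fun y => ω (c - y)) y) = Omg ω (c - r) := by
  have h1 : ∀ y : ℝ, (Ioi r).indicator (fun y => ω (c - y)) y =
      (Iio (c - r)).indicator ω (c - y) := by
    intro y
    by_cases hy : r < y
    · rw [Set.indicator_of_mem (by exact hy : y ∈ Ioi r),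
        Set.indicator_of_mem (by simp [Set.mem_Iio]; linarith : c - y ∈ Iio (c - r))]
    · rw [Set.indicator_of_notMem (by exact hy : y ∉ Ioi r),
        Set.indicator_of_notMem (by simp only [Set.mem_Iio, not_lt] at hy ⊢; linarith)]
  rw [funext h1]
  rw [integral_sub_left_eq_self (fun z => (Iio (c - r)).indicator ω z) volume c]
  exact integral_indicator measurableSet_Iio

end Aux5
section Aux6

open MeasureTheory

variable {f g p h ω : ℝ → ℝ}

lemma restrict_finite (s : Set ℝ) (a b : ℝ) (hs : s = Ioo a b) :
    IsFiniteMeasure (volume.restrict s) := by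
  constructor
  rw [Measure.restrict_apply_univ, hs, Real.volume_Ioo]
  exact ENNReal.ofReal_lt_top

/-- The inner integral identity. -/
lemma inner_int (hp : MemPsi p) (hω : IsAveragingKernel ω) (c : ℝ) :
    (∫ w in Ioo (limBot p) (limTop p), Omg ω (c - quant p w)) = conv p ω c - limBot p := by
  set s : Set ℝ := Ioo (limBot p) (limTop p) with hs
  haveI : IsFiniteMeasure (volume.restrict s) := restrict_finite s _ _ hs
  set u : ℝ × ℝ → ℝ :=
    fun q => ({q : ℝ × ℝ | q.1 < p q.2}).indicator (fun q => ω (c - q.2)) q with hu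
  have hmu : Measurable u := by
    refine Measurable.indicator ?_ ?_
    · exact hω.measurable.comp (measurable_const.sub measurable_snd)
    · exact measurableSet_lt measurable_fst (hp.1.measurable.comp measurable_snd)
  have husec : ∀ w y : ℝ, u (w, y) = ({y | w < p y}).indicator (fun y => ω (c - y)) y := by
    intro w y
    simp only [hu, Set.indicator_apply, Set.mem_setOf_eq]
  have husec2 : ∀ w y : ℝ, u (w, y) = (Iio (p y)).indicator (fun _ => ω (c - y)) w := by
    intro w y
    simp only [hu, Set.indicator_apply, Set.mem_setOf_eq, Set.mem_Iio]
  have hintsec : ∀ w : ℝ, Integrable (fun y => u (w, y)) := by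
    intro w
    have : (fun y => u (w, y)) = ({y | w < p y}).indicator (fun y => ω (c - y)) :=
      funext (husec w)
    rw [this]
    exact (hω.integrable_shift c).indicator (hp.1.measurable measurableSet_Ioi)
  have hbd : ∀ w y : ℝ, ‖u (w, y)‖ ≤ |ω (c - y)| := by
    intro w y
    rw [husec w y]
    by_cases hy : y ∈ {y | w < p y}
    · rw [Set.indicator_of_mem hy]; exact le_refl _
    · rw [Set.indicator_of_notMem hy]; simp
  -- integrability on the product
  have hint : Integrable u ((volume.restrict s).prod volume) := by
    rw [integrable_prod_iff hmu.aestronglyMeasurable]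
    constructor
    · exact Filter.Eventually.of_forall (fun w => hintsec w)
    · refine Integrable.mono' (integrable_const (∫ z : ℝ, |ω z|)) ?_ ?_
      · exact (hmu.norm.aestronglyMeasurable).integral_prod_right'
      · refine Filter.Eventually.of_forall (fun w => ?_)
        rw [Real.norm_eq_abs, abs_of_nonneg (integral_nonneg (fun y => norm_nonneg _))]
        have h5 : (∫ y : ℝ, ‖u (w, y)‖) ≤ ∫ y : ℝ, |ω (c - y)| :=
          integral_mono (hintsec w).norm (hω.integrable_shift c).abs (hbd w)
        have h6 : (∫ y : ℝ, |ω (c - y)|) = ∫ z : ℝ, |ω z| :=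
          integral_sub_left_eq_self (fun z => |ω z|) volume c
        rw [← h6]; exact h5
  -- step 1 : a.e. identification of the integrand
  have hflatnull : volume {w | ∃ y₁ y₂, y₁ < y₂ ∧ p y₁ = w ∧ p y₂ = w} = 0 :=
    (flat_countable hp.1).measure_zero _
  have hae : ∀ᵐ w : ℝ, w ∈ s →
      Omg ω (c - quant p w) = ∫ y : ℝ, u (w, y) := by
    filter_upwards [MeasureTheory.measure_eq_zero_iff_ae_notMem.mp hflatnull] with w hwflat hws
    obtain ⟨N, hN0, hNiff⟩ := ray_iff hp hws hwflat
    rw [← Omg_ray hω c (quant p w)]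
    refine integral_congr_ae ?_
    filter_upwards [MeasureTheory.measure_eq_zero_iff_ae_notMem.mp hN0] with y hyN
    rw [husec w y]
    by_cases hy : w < p y
    · have h1 : quant p w < y := (hNiff y hyN).mp hy
      simp [Set.indicator_apply, Set.mem_Ioi, Set.mem_setOf_eq, hy, h1]
    · have h1 : ¬ quant p w < y := fun hc => hy ((hNiff y hyN).mpr hc)
      simp [Set.indicator_apply, Set.mem_Ioi, Set.mem_setOf_eq, hy, h1]
  -- step 2 : congruence + Fubini
  have h7 : (∫ w in s, Omg ω (c - quant p w)) = ∫ w in s, ∫ y : ℝ, u (w, y) := by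
    exact setIntegral_congr_ae measurableSet_Ioo hae
  have h8 : (∫ w in s, ∫ y : ℝ, u (w, y)) = ∫ y : ℝ, ∫ w in s, u (w, y) := by
    exact integral_integral_swap hint
  -- step 3 : the inner w-integral
  have h9 : ∀ y : ℝ, (∫ w in s, u (w, y)) = (p y - limBot p) * ω (c - y) := by
    intro y
    have : (fun w => u (w, y)) = (Iio (p y)).indicator (fun _ => ω (c - y)) :=
      funext (fun w => husec2 w y)
    rw [this, setIntegral_indicator measurableSet_Iio]
    rw [setIntegral_const]
    have h10 : s ∩ Iio (p y) = Ioo (limBot p) (p y) := by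
      rw [hs, Set.Ioo_inter_Iio, min_eq_right (hp.le_limTop y)]
    rw [h10, measureReal_def, Real.volume_Ioo, ENNReal.toReal_ofReal (sub_nonneg.2 (hp.limBot_le y))]
    rw [smul_eq_mul]
  -- step 4 : conclude
  rw [h7, h8]
  have h11 : (fun y : ℝ => ∫ w in s, u (w, y)) =
      fun y : ℝ => p y * ω (c - y) - limBot p * ω (c - y) := by
    funext y; rw [h9 y]; ring
  rw [h11, integral_sub (hp.integrable_mul_shift hω c)
    ((hω.integrable_shift c).const_mul (limBot p)),
    MeasureTheory.integral_const_mul, hω.integral_shift c, mul_one, conv]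

end Aux6
section Aux7

open MeasureTheory

variable {f g p h ω : ℝ → ℝ}

lemma double_sum (hfΨ : MemPsi f) (hgΨ : MemPsi g) (hω : IsAveragingKernel ω) :
    (∫ v in Ioo (limBot g) (limTop g),
        ∫ w in Ioo (limBot f) (limTop f), Omg ω (quant g v - quant f w)) +
      (∫ w in Ioo (limBot f) (limTop f),
        ∫ v in Ioo (limBot g) (limTop g), Omg ω (quant f w - quant g v)) =
    (limTop g - limBot g) * (limTop f - limBot f) := by
  set μ := volume.restrict (Ioo (limBot g) (limTop g)) with hμ
  set ν := volume.restrict (Ioo (limBot f) (limTop f)) with hν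
  haveI : IsFiniteMeasure μ := restrict_finite _ _ _ rfl
  haveI : IsFiniteMeasure ν := restrict_finite _ _ _ rfl
  set G : ℝ × ℝ → ℝ := fun q => Omg ω (quant g q.1 - quant f q.2) with hG
  set G2 : ℝ × ℝ → ℝ := fun q => Omg ω (quant f q.2 - quant g q.1) with hG2
  have hmG : Measurable G :=
    (Omg_measurable hω).comp
      (((quant_measurable hgΨ).comp measurable_fst).sub
        ((quant_measurable hfΨ).comp measurable_snd))
  have hmG2 : Measurable G2 :=
    (Omg_measurable hω).comp
      (((quant_measurable hfΨ).comp measurable_snd).sub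
        ((quant_measurable hgΨ).comp measurable_fst))
  have hbound : ∀ (H : ℝ × ℝ → ℝ), Measurable H → (∀ q, H q = Omg ω (quant g q.1 - quant f q.2) ∨
      H q = Omg ω (quant f q.2 - quant g q.1)) → Integrable H (μ.prod ν) := by
    intro H hmH hcase
    refine Integrable.mono' (integrable_const 1) hmH.aestronglyMeasurable ?_
    refine Filter.Eventually.of_forall (fun q => ?_)
    rw [Real.norm_eq_abs]
    rcases hcase q with hq | hq <;>
      · rw [hq, abs_of_nonneg (Omg_nonneg hω _)]
        exact Omg_le_one hω _
  have hiG : Integrable G (μ.prod ν) := hbound G hmG (fun q => Or.inl rfl)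
  have hiG2 : Integrable G2 (μ.prod ν) := hbound G2 hmG2 (fun q => Or.inr rfl)
  have e1 : (∫ v in Ioo (limBot g) (limTop g),
      ∫ w in Ioo (limBot f) (limTop f), Omg ω (quant g v - quant f w)) =
      ∫ q, G q ∂(μ.prod ν) := (integral_prod G hiG).symm
  have e2 : (∫ w in Ioo (limBot f) (limTop f),
      ∫ v in Ioo (limBot g) (limTop g), Omg ω (quant f w - quant g v)) =
      ∫ q, G2 q ∂(μ.prod ν) := by
    rw [← integral_integral_swap (f := fun v w => G2 (v, w)) hiG2]
    exact (integral_prod G2 hiG2).symm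
  rw [e1, e2, ← integral_add hiG hiG2]
  have e3 : (fun q => G q + G2 q) = fun _ : ℝ × ℝ => (1:ℝ) := by
    funext q
    have := Omg_add_neg hω (quant g q.1 - quant f q.2)
    rw [hG, hG2]
    simpa [neg_sub] using this
  rw [e3, integral_const, smul_eq_mul, mul_one]
  rw [← Set.univ_prod_univ, measureReal_def, Measure.prod_prod, hμ, hν,
    Measure.restrict_apply_univ, Measure.restrict_apply_univ,
    Real.volume_Ioo, Real.volume_Ioo, ← ENNReal.ofReal_mul
      (sub_nonneg.2 hgΨ.limBot_le_limTop),
    ENNReal.toReal_ofReal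
      (mul_nonneg (sub_nonneg.2 hgΨ.limBot_le_limTop) (sub_nonneg.2 hfΨ.limBot_le_limTop))]

end Aux7
section Aux8

open MeasureTheory

variable {f g p h hfx ω : ℝ → ℝ}

/-- The main integral identity for one side. -/
lemma side_int {hh : ℝ → ℝ} (hhX : MemX hh) (hpΨ : MemPsi p) (hqΨ : MemPsi g)
    (hω : IsAveragingKernel ω)
    (hwv : ∀ x, p x ∈ Icc (lm hh (conv g ω x)) (rm hh (conv g ω x))) :
    (∫ x in Ioo (limBot p) (limTop p), Xinv hh x) =
      limBot g * (limTop p - limBot p) +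
        ∫ v in Ioo (limBot p) (limTop p),
          ∫ w in Ioo (limBot g) (limTop g), Omg ω (quant p v - quant g w) := by
  haveI : IsFiniteMeasure (volume.restrict (Ioo (limBot p) (limTop p))) :=
    restrict_finite _ _ _ rfl
  haveI : IsFiniteMeasure (volume.restrict (Ioo (limBot g) (limTop g))) :=
    restrict_finite _ _ _ rfl
  have hkey : ∀ v ∈ Ioo (limBot p) (limTop p),
      Xinv hh v = limBot g +
        ∫ w in Ioo (limBot g) (limTop g), Omg ω (quant p v - quant g w) := by
    intro v hv
    rw [key1 hhX hpΨ (conv_monotone hqΨ hω) (conv_continuous hqΨ hω)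
      (conv_mem hqΨ hω) hwv hv]
    rw [inner_int hqΨ hω (quant p v)]
    ring
  rw [setIntegral_congr_fun measurableSet_Ioo hkey]
  -- integrability of the inner integral
  have hmG : Measurable (fun q : ℝ × ℝ => Omg ω (quant p q.1 - quant g q.2)) :=
    (Omg_measurable hω).comp
      (((quant_measurable hpΨ).comp measurable_fst).sub
        ((quant_measurable hqΨ).comp measurable_snd))
  have hInner : Integrable
      (fun v => ∫ w in Ioo (limBot g) (limTop g), Omg ω (quant p v - quant g w))
      (volume.restrict (Ioo (limBot p) (limTop p))) := by
    refine Integrable.mono' (integrable_const ((limTop g) - (limBot g))) ?_ ?_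
    · exact (hmG.aestronglyMeasurable).integral_prod_right'
    · refine Filter.Eventually.of_forall (fun v => ?_)
      rw [Real.norm_eq_abs, abs_of_nonneg (setIntegral_nonneg measurableSet_Ioo
        (fun w _ => Omg_nonneg hω _))]
      have h1 : (∫ w in Ioo (limBot g) (limTop g), Omg ω (quant p v - quant g w)) ≤
          ∫ _ in Ioo (limBot g) (limTop g), (1:ℝ) := by
        refine integral_mono ?_ (integrable_const 1)
          (fun w => Omg_le_one hω _)
        refine Integrable.mono' (integrable_const 1)
          ((hmG.comp (measurable_const.prodMk measurable_id)).aestronglyMeasurable) ?_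
        refine Filter.Eventually.of_forall (fun w => ?_)
        rw [Real.norm_eq_abs, abs_of_nonneg (Omg_nonneg hω _)]
        exact Omg_le_one hω _
      have h2 : (∫ _ in Ioo (limBot g) (limTop g), (1:ℝ)) = limTop g - limBot g := by
        rw [setIntegral_const, smul_eq_mul, mul_one, measureReal_def, Real.volume_Ioo,
          ENNReal.toReal_ofReal (sub_nonneg.2 hqΨ.limBot_le_limTop)]
      rw [← h2]; exact h1
  rw [integral_add (integrable_const _) hInner, setIntegral_const, smul_eq_mul,
    measureReal_def, Real.volume_Ioo, ENNReal.toReal_ofReal (sub_nonneg.2 hpΨ.limBot_le_limTop),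
    mul_comm]

end Aux8
/-- **Invariance of fixed point potential.** -/
theorem invariance_fixed_point_potential
    (ω hf hg f g : ℝ → ℝ) (α : ℝ)
    (hω : IsAveragingKernel ω) (hhf : MemX hf) (hhg : MemX hg)
    (hfΨ : MemPsi f) (hgΨ : MemPsi g)
    (hwave : ConsistentWave hf hg f g ω α) :
    IsCrossing hf hg (limBot g) (limBot f) ∧
    IsCrossing hf hg (limTop g) (limTop f) ∧
    (α = 0 →
      Pot hf hg (limBot g) (limBot f) = Pot hf hg (limTop g) (limTop f)) := by
  obtain ⟨hw1, hw2⟩ := hwave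
  have hshiftBot : Filter.Tendsto (fun x => conv g ω (x + α)) atBot (nhds (limBot g)) :=
    (conv_tendsto_atBot hgΨ hω).comp (tendsto_atBot_add_const_right atBot α tendsto_id)
  have hshiftTop : Filter.Tendsto (fun x => conv g ω (x + α)) atTop (nhds (limTop g)) :=
    (conv_tendsto_atTop hgΨ hω).comp (tendsto_atTop_add_const_right atTop α tendsto_id)
  refine ⟨⟨hgΨ.limBot_mem, hfΨ.limBot_mem, ?_, ?_⟩,
    ⟨hgΨ.limTop_mem, hfΨ.limTop_mem, ?_, ?_⟩, ?_⟩
  · exact cross_limit hhg (fun x => conv_mem hfΨ hω x) hgΨ hw2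
      (conv_tendsto_atBot hfΨ hω) hgΨ.tendsto_atBot hgΨ.limBot_mem
  · exact cross_limit hhf (fun x => conv_mem hgΨ hω (x + α)) hfΨ hw1
      hshiftBot hfΨ.tendsto_atBot hfΨ.limBot_mem
  · exact cross_limit hhg (fun x => conv_mem hfΨ hω x) hgΨ hw2
      (conv_tendsto_atTop hfΨ hω) hgΨ.tendsto_atTop hgΨ.limTop_mem
  · exact cross_limit hhf (fun x => conv_mem hgΨ hω (x + α)) hfΨ hw1
      hshiftTop hfΨ.tendsto_atTop hfΨ.limTop_mem
  -- part (C)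
  intro hα
  subst hα
  have hw1' : ∀ x, f x ∈ Icc (lm hf (conv g ω x)) (rm hf (conv g ω x)) := by
    intro x
    simpa using hw1 x
  -- the two side identities
  have hA1 := side_int hhg hgΨ hfΨ hω hw2
  have hA2 := side_int hhf hfΨ hgΨ hω hw1'
  have hD := double_sum hgΨ hfΨ hω
  -- interval integral decompositions
  have ig1 : IntervalIntegrable (Xinv hg) MeasureTheory.volume 0 (limBot g) :=
    ((Xinv_monotone hg).monotoneOn _).intervalIntegrable
  have ig2 : IntervalIntegrable (Xinv hg) MeasureTheory.volume (limBot g) (limTop g) :=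
    ((Xinv_monotone hg).monotoneOn _).intervalIntegrable
  have if1 : IntervalIntegrable (Xinv hf) MeasureTheory.volume 0 (limBot f) :=
    ((Xinv_monotone hf).monotoneOn _).intervalIntegrable
  have if2 : IntervalIntegrable (Xinv hf) MeasureTheory.volume (limBot f) (limTop f) :=
    ((Xinv_monotone hf).monotoneOn _).intervalIntegrable
  have eg : (∫ x in (0:ℝ)..(limBot g), Xinv hg x) +
      (∫ x in (limBot g)..(limTop g), Xinv hg x) = ∫ x in (0:ℝ)..(limTop g), Xinv hg x :=
    intervalIntegral.integral_add_adjacent_intervals ig1 ig2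
  have ef : (∫ x in (0:ℝ)..(limBot f), Xinv hf x) +
      (∫ x in (limBot f)..(limTop f), Xinv hf x) = ∫ x in (0:ℝ)..(limTop f), Xinv hf x :=
    intervalIntegral.integral_add_adjacent_intervals if1 if2
  have eg2 : (∫ x in (limBot g)..(limTop g), Xinv hg x) =
      ∫ x in Ioo (limBot g) (limTop g), Xinv hg x := by
    rw [intervalIntegral.integral_of_le hgΨ.limBot_le_limTop,
      MeasureTheory.integral_Ioc_eq_integral_Ioo]
  have ef2 : (∫ x in (limBot f)..(limTop f), Xinv hf x) =
      ∫ x in Ioo (limBot f) (limTop f), Xinv hf x := by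
    rw [intervalIntegral.integral_of_le hfΨ.limBot_le_limTop,
      MeasureTheory.integral_Ioc_eq_integral_Ioo]
  rw [Pot, Pot, ← eg, ← ef, eg2, ef2, hA1, hA2]
  nlinarith [hD]
end
end
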